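/- Let B ⊆ ℝ² be a convex body (compact convex with nonempty interior) and let s = [a, b] (a ≠ b) be a closed segment disjoint from B. For a point c ∉ B, let θ(c) = sup_{x, y ∈ B} ∠(x − c, y − c) be the angle of the minimum cone with apex c containing B, and let θ = max_{c ∈ s} θ(c). Then the measure of all lines that meet both B and s is at most 2 sin(θ/2) · ‖b − a‖; that is, the 2-dimensional Lebesgue measure of {(α, p) ∈ [0, π) × ℝ : ℓ(α, p) ∩ B ≠ ∅ and ℓ(α, p) ∩ s ≠ ∅} is at most 2 sin(θ/2) · ‖b − a‖. -/

import Mathlib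

open MeasureTheory Set

noncomputable section

/-- A point in the plane. -/
abbrev Pt : Type := EuclideanSpace ℝ (Fin 2)

/-- The line ℓ(α, p) = {(x, y) : x cos α + y sin α = p}. -/
def paramLine (α p : ℝ) : Set Pt :=
  {q : Pt | q 0 * Real.cos α + q 1 * Real.sin α = p}

/-- The set of parameters (α, p) ∈ [0, π) × ℝ of lines that meet both sets A and B. -/
def linesMeetingBoth (A B : Set Pt) : Set (ℝ × ℝ) :=
  {αp : ℝ × ℝ | αp.1 ∈ Ico 0 Real.pi ∧ (paramLine αp.1 αp.2 ∩ A).Nonempty ∧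
    (paramLine αp.1 αp.2 ∩ B).Nonempty}

/-- The angle of the minimum cone with apex c containing B:
θ(c) = sup_{x, y ∈ B} ∠(x − c, y − c). -/
def coneAngle (B : Set Pt) (c : Pt) : ℝ :=
  sSup {t : ℝ | ∃ x ∈ B, ∃ y ∈ B, t = InnerProductGeometry.angle (x - c) (y - c)}

open Real Pointwise in
def dot (α : ℝ) (q : Pt) : ℝ := q 0 * Real.cos α + q 1 * Real.sin α

open Real Pointwise in
lemma norm_sq_coords (z : Pt) : ‖z‖^2 = z 0^2 + z 1^2 := by
  rw [EuclideanSpace.norm_eq, Real.sq_sqrt (by positivity)]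
  simp [Fin.sum_univ_two]

open Real Pointwise in
lemma inner_coords (z w : Pt) : (inner ℝ z w : ℝ) = z 0 * w 0 + z 1 * w 1 := by
  rw [PiLp.inner_apply, Fin.sum_univ_two]
  simp [RCLike.inner_apply]; ring

open Real Pointwise in
lemma exists_angle_of_unit {w : Pt} (hw : ‖w‖ = 1) : ∃ ν, w 0 = Real.cos ν ∧ w 1 = Real.sin ν := by
  have hsq : w 0 ^ 2 + w 1 ^ 2 = 1 := by
    have := norm_sq_coords w; rw [hw] at this; linarith
  set z : ℂ := ⟨w 0, w 1⟩ with hz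
  have habs : ‖z‖ = 1 := by
    simp only [Complex.norm_def, Complex.normSq_mk, hz]
    rw [show w 0 * w 0 + w 1 * w 1 = 1 by nlinarith]
    exact Real.sqrt_one
  have hz0 : z ≠ 0 := by
    intro h; rw [h] at habs; simp at habs
  refine ⟨z.arg, ?_, ?_⟩
  · rw [Complex.cos_arg hz0, habs]; simp [hz]
  · rw [Complex.sin_arg, habs]; simp [hz]

open Real Pointwise in
lemma dot_sub (α : ℝ) (x y : Pt) : dot α (x - y) = dot α x - dot α y := by
  simp [dot, PiLp.sub_apply]; ring

open Real Pointwise in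
lemma dot_add (α : ℝ) (x y : Pt) : dot α (x + y) = dot α x + dot α y := by
  simp [dot, PiLp.add_apply]; ring

open Real Pointwise in
lemma dot_smul (α t : ℝ) (x : Pt) : dot α (t • x) = t * dot α x := by
  simp [dot, PiLp.smul_apply, smul_eq_mul]; ring

open Real Pointwise in
lemma dot_continuous (v : Pt) : Continuous fun α => dot α v := by
  unfold dot; fun_prop

open Real Pointwise in
lemma dot_polar {z : Pt} {r ψ : ℝ} (h0 : z 0 = r * Real.cos ψ) (h1 : z 1 = r * Real.sin ψ)
    (α : ℝ) : dot α z = r * Real.cos (α - ψ) := by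
  simp [dot, h0, h1, Real.cos_sub]; ring

open Real Pointwise in
lemma sin_lower {θ x : ℝ} (h0 : 0 ≤ θ) (hπ : θ ≤ π) (hx : x ∈ Icc (π/2 - θ/2) (π/2 + θ/2)) :
    Real.cos (θ/2) ≤ Real.sin x := by
  obtain ⟨h1, h2⟩ := hx
  rcases le_or_gt x (π/2) with h | h
  · rw [← Real.sin_pi_div_two_sub]
    apply Real.sin_le_sin_of_le_of_le_pi_div_two (by linarith) (by linarith) (by linarith)
  · rw [← Real.sin_pi_sub, ← Real.sin_pi_div_two_sub]
    apply Real.sin_le_sin_of_le_of_le_pi_div_two (by linarith) (by linarith) (by linarith)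

open Real Pointwise in
lemma cos_window {θ : ℝ} (ρ : ℝ) (h0 : 0 ≤ θ) (hπ : θ ≤ π) :
    ∫ α in ρ..(ρ+θ), |Real.cos α| ≤ 2 * Real.sin (θ/2) := by
  have hπ0 := Real.pi_pos
  have hsinθ : 0 ≤ Real.sin (θ/2) := Real.sin_nonneg_of_nonneg_of_le_pi (by linarith) (by linarith)
  have hcosθ : 0 ≤ Real.cos (θ/2) := Real.cos_nonneg_of_mem_Icc ⟨by linarith, by linarith⟩
  -- reduce mod π
  obtain ⟨k, ρ', hρ'1, hρ'2, rfl⟩ : ∃ (k : ℤ) (ρ' : ℝ), -(π/2) ≤ ρ' ∧ ρ' < π/2 ∧ ρ = ρ' + k * π := by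
    refine ⟨⌊(ρ + π/2)/π⌋, ρ - ⌊(ρ + π/2)/π⌋ * π, ?_, ?_, by ring⟩
    · have h1 := Int.floor_le ((ρ + π/2)/π)
      have h2 : (⌊(ρ + π/2)/π⌋ : ℝ) * π ≤ (ρ + π/2)/π * π :=
        mul_le_mul_of_nonneg_right h1 (le_of_lt hπ0)
      rw [div_mul_cancel₀] at h2 <;> [linarith; positivity]
    · have h1 := Int.lt_floor_add_one ((ρ + π/2)/π)
      have h2 : (ρ + π/2)/π * π < ((⌊(ρ + π/2)/π⌋ : ℝ) + 1) * π :=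
        mul_lt_mul_of_pos_right h1 hπ0
      rw [div_mul_cancel₀] at h2 <;> [linarith; positivity]
  have hper : ∫ α in (ρ' + k*π)..(ρ' + k*π + θ), |Real.cos α| = ∫ α in ρ'..(ρ'+θ), |Real.cos α| := by
    have h1 := intervalIntegral.integral_comp_add_right (a := ρ') (b := ρ' + θ)
      (fun x => |Real.cos x|) (k * π)
    have h2 : ∫ x in ρ'..(ρ'+θ), |Real.cos (x + k * π)| = ∫ x in ρ'..(ρ'+θ), |Real.cos x| := by
      apply intervalIntegral.integral_congr
      intro x _
      show |Real.cos (x + k * π)| = |Real.cos x|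
      rw [Real.cos_add_int_mul_pi, abs_mul]
      rcases Int.even_or_odd k with hk | hk
      · rw [hk.neg_one_zpow]; simp
      · rw [hk.neg_one_zpow]; simp
    rw [h2] at h1
    rw [show ρ' + k*π + θ = ρ' + θ + k*π by ring]
    exact h1.symm
  rw [hper]
  have hint : ∀ u v : ℝ, IntervalIntegrable (fun x => |Real.cos x|) volume u v :=
    fun u v => (Real.continuous_cos.abs).intervalIntegrable u v
  rcases le_or_gt (ρ' + θ) (π/2) with hc | hc
  · have heq : ∫ α in ρ'..(ρ'+θ), |Real.cos α| = ∫ α in ρ'..(ρ'+θ), Real.cos α := by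
      apply intervalIntegral.integral_congr
      intro x hx
      rw [uIcc_of_le (by linarith)] at hx
      exact abs_of_nonneg (Real.cos_nonneg_of_mem_Icc ⟨by linarith [hx.1], by linarith [hx.2]⟩)
    rw [heq, integral_cos]
    have key : Real.sin (ρ'+θ) - Real.sin ρ' = 2 * Real.cos (ρ' + θ/2) * Real.sin (θ/2) := by
      have e1 : Real.sin (ρ'+θ) = Real.sin (ρ'+θ/2) * Real.cos (θ/2) + Real.cos (ρ'+θ/2) * Real.sin (θ/2) := by
        rw [← Real.sin_add]; ring_nf
      have e2 : Real.sin ρ' = Real.sin (ρ'+θ/2) * Real.cos (θ/2) - Real.cos (ρ'+θ/2) * Real.sin (θ/2) := by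
        rw [← Real.sin_sub]; ring_nf
      linarith
    rw [key]
    nlinarith [Real.cos_le_one (ρ' + θ/2)]
  · have hsplit : ∫ α in ρ'..(ρ'+θ), |Real.cos α| =
        (∫ α in ρ'..(π/2), |Real.cos α|) + ∫ α in (π/2)..(ρ'+θ), |Real.cos α| :=
      (intervalIntegral.integral_add_adjacent_intervals (hint _ _) (hint _ _)).symm
    have h1 : ∫ α in ρ'..(π/2), |Real.cos α| = 1 - Real.sin ρ' := by
      have heq : ∫ α in ρ'..(π/2), |Real.cos α| = ∫ α in ρ'..(π/2), Real.cos α := by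
        apply intervalIntegral.integral_congr
        intro x hx
        rw [uIcc_of_le (by linarith)] at hx
        exact abs_of_nonneg (Real.cos_nonneg_of_mem_Icc ⟨by linarith [hx.1], by linarith [hx.2]⟩)
      rw [heq, integral_cos, Real.sin_pi_div_two]
    have h2 : ∫ α in (π/2)..(ρ'+θ), |Real.cos α| = 1 - Real.sin (ρ'+θ) := by
      have heq : ∫ α in (π/2)..(ρ'+θ), |Real.cos α| = ∫ α in (π/2)..(ρ'+θ), -Real.cos α := by
        apply intervalIntegral.integral_congr
        intro x hx
        rw [uIcc_of_le (by linarith)] at hx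
        show |Real.cos x| = -Real.cos x
        rw [abs_of_nonpos]
        apply Real.cos_nonpos_of_pi_div_two_le_of_le hx.1
        linarith [hx.2]
      rw [heq, intervalIntegral.integral_neg, integral_cos,
        Real.sin_pi_div_two]
      ring
    rw [hsplit, h1, h2]
    have key : Real.sin ρ' + Real.sin (ρ'+θ) = 2 * Real.sin (ρ' + θ/2) * Real.cos (θ/2) := by
      have e1 : Real.sin (ρ'+θ) = Real.sin (ρ'+θ/2) * Real.cos (θ/2) + Real.cos (ρ'+θ/2) * Real.sin (θ/2) := by
        rw [← Real.sin_add]; ring_nf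
      have e2 : Real.sin ρ' = Real.sin (ρ'+θ/2) * Real.cos (θ/2) - Real.cos (ρ'+θ/2) * Real.sin (θ/2) := by
        rw [← Real.sin_sub]; ring_nf
      linarith
    have hge : Real.cos (θ/2) ≤ Real.sin (ρ' + θ/2) :=
      sin_lower h0 hπ ⟨by linarith, by linarith⟩
    have hpyth := Real.sin_sq_add_cos_sq (θ/2)
    nlinarith [Real.sin_le_one (θ/2)]

open Real Pointwise in
lemma sq_sin_cos (ν : ℝ) : Real.cos ν ^2 + Real.sin ν ^2 = 1 := by
  rw [add_comm]; exact Real.sin_sq_add_cos_sq ν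

open Real Pointwise in
lemma polar_aux {ν z0 z1 r : ℝ} (hr : 0 < r) (hz : z0^2 + z1^2 = r^2)
    (hpos : 0 < Real.cos ν * z0 + Real.sin ν * z1) :
    z0 = r * Real.cos (ν + Real.arcsin ((-Real.sin ν * z0 + Real.cos ν * z1)/r)) ∧
    z1 = r * Real.sin (ν + Real.arcsin ((-Real.sin ν * z0 + Real.cos ν * z1)/r)) := by
  have hw := sq_sin_cos ν
  set s := (-Real.sin ν * z0 + Real.cos ν * z1) / r with hs
  set t := (Real.cos ν * z0 + Real.sin ν * z1) / r with ht
  have htpos : 0 < t := div_pos hpos hr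
  have hst : s^2 + t^2 = 1 := by
    rw [hs, ht, div_pow, div_pow, ← add_div, div_eq_one_iff_eq (by positivity)]
    nlinarith
  have hs1 : -1 ≤ s ∧ s ≤ 1 := by constructor <;> nlinarith
  have hsin : Real.sin (Real.arcsin s) = s := Real.sin_arcsin hs1.1 hs1.2
  have hcos : Real.cos (Real.arcsin s) = t := by
    rw [Real.cos_arcsin, show 1 - s^2 = t^2 by linarith]
    exact Real.sqrt_sq htpos.le
  constructor
  · rw [Real.cos_add, hsin, hcos, ht, hs]
    field_simp
    linear_combination (-z0) * hw
  · rw [Real.sin_add, hsin, hcos, ht, hs]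
    field_simp
    linear_combination (-z1) * hw

open Real Pointwise in
lemma exists_polar (v : Pt) (hv : v ≠ 0) : ∃ ν, v 0 = ‖v‖ * Real.cos ν ∧ v 1 = ‖v‖ * Real.sin ν := by
  have hn : ‖v‖ ≠ 0 := norm_ne_zero_iff.mpr hv
  have hw : ‖(‖v‖⁻¹ • v : Pt)‖ = 1 := by
    rw [norm_smul, norm_inv, norm_norm, inv_mul_cancel₀ hn]
  obtain ⟨ν, h0, h1⟩ := exists_angle_of_unit hw
  rw [PiLp.smul_apply, smul_eq_mul] at h0 h1
  refine ⟨ν, ?_, ?_⟩ <;> field_simp at h0 h1 ⊢ <;> linarith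

open Real Pointwise in
lemma lintegral_dot_window (v : Pt) {θ : ℝ} (h0 : 0 ≤ θ) (hπ : θ ≤ π) (ρ : ℝ) :
    ∫⁻ α in Icc ρ (ρ+θ), ENNReal.ofReal |dot α v|
      ≤ ENNReal.ofReal (2 * Real.sin (θ/2) * ‖v‖) := by
  have hsin : 0 ≤ Real.sin (θ/2) :=
    Real.sin_nonneg_of_nonneg_of_le_pi (by linarith) (by linarith [Real.pi_pos])
  rcases eq_or_ne v 0 with rfl | hv
  · have hz : ∀ α, dot α (0 : Pt) = 0 := by intro α; simp [dot]
    simp only [hz, abs_zero, ENNReal.ofReal_zero, lintegral_const, zero_mul]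
    exact zero_le
  obtain ⟨ν, h0', h1'⟩ := exists_polar v hv
  have hdot : ∀ α, dot α v = ‖v‖ * Real.cos (α - ν) := dot_polar h0' h1'
  have habs : ∀ α, |dot α v| = ‖v‖ * |Real.cos (α - ν)| := by
    intro α; rw [hdot, abs_mul, abs_of_nonneg (norm_nonneg v)]
  calc ∫⁻ α in Icc ρ (ρ+θ), ENNReal.ofReal |dot α v|
      = ∫⁻ α in Icc ρ (ρ+θ), ENNReal.ofReal (‖v‖ * |Real.cos (α - ν)|) := by
        apply lintegral_congr; intro α; rw [habs]
    _ = ENNReal.ofReal (∫ α in Icc ρ (ρ+θ), ‖v‖ * |Real.cos (α - ν)|) := by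
        rw [MeasureTheory.ofReal_integral_eq_lintegral_ofReal]
        · exact (Continuous.mul continuous_const
            ((Real.continuous_cos.comp (continuous_id.sub continuous_const)).abs)).integrableOn_Icc
        · exact Filter.Eventually.of_forall fun α => by positivity
    _ ≤ ENNReal.ofReal (2 * Real.sin (θ/2) * ‖v‖) := by
        apply ENNReal.ofReal_le_ofReal
        rw [MeasureTheory.integral_Icc_eq_integral_Ioc,
          ← intervalIntegral.integral_of_le (by linarith : ρ ≤ ρ + θ),
          intervalIntegral.integral_const_mul]
        have hsub := intervalIntegral.integral_comp_sub_right (a := ρ) (b := ρ+θ)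
          (fun x => |Real.cos x|) ν
        rw [hsub]
        have := cos_window (ρ - ν) h0 hπ
        rw [show ρ - ν + θ = ρ + θ - ν by ring] at this
        calc ‖v‖ * ∫ x in (ρ-ν)..(ρ+θ-ν), |Real.cos x|
            ≤ ‖v‖ * (2 * Real.sin (θ/2)) :=
              mul_le_mul_of_nonneg_left this (norm_nonneg v)
          _ = 2 * Real.sin (θ/2) * ‖v‖ := by ring

open Real Pointwise in
lemma lintegral_dot_shift (v : Pt) (m : ℝ) :
    ∫⁻ α in Icc (0:ℝ) m, ENNReal.ofReal |dot α v|
      = ∫⁻ α in Icc π (m+π), ENNReal.ofReal |dot α v| := by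
  have hg : MeasurePreserving (fun x : ℝ => x + π) volume volume :=
    measurePreserving_add_right volume π
  have hemb : MeasurableEmbedding (fun x : ℝ => x + π) :=
    (MeasurableEquiv.addRight π).measurableEmbedding
  have h := hg.setLIntegral_comp_emb hemb (fun α => ENNReal.ofReal |dot α v|) (Icc 0 m)
  have himg : (fun x : ℝ => x + π) '' Icc 0 m = Icc π (m+π) := by
    simp [Set.image_add_const_Icc]
  rw [himg] at h
  rw [← h]
  apply lintegral_congr
  intro α
  have : dot (α + π) v = -dot α v := by
    simp [dot, Real.cos_add, Real.sin_add]; ring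
  rw [this, abs_neg]

open Real Pointwise in
lemma volume_affine_image (c m : ℝ) (T : Set ℝ) :
    volume ((fun t => c + m * t) '' T) = ENNReal.ofReal |m| * volume T := by
  have himg : (fun t => c + m * t) '' T = c +ᵥ (m • T) := by
    rw [← Set.image_smul, ← Set.image_vadd, Set.image_image]
    rfl
  rw [himg, measure_vadd, Measure.addHaar_smul]
  congr 1
  rw [Module.finrank_self, pow_one]

open Real Pointwise in
lemma exists_angle_family (B : Set Pt) (hBclosed : IsClosed B) (hBconv : Convex ℝ B)
    (hBne : B.Nonempty) (c : Pt) (hc : c ∉ B) {θ : ℝ}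
    (hang : ∀ x ∈ B, ∀ y ∈ B, InnerProductGeometry.angle (x - c) (y - c) ≤ θ) :
    ∃ (Ψ : Pt → ℝ) (φ : ℝ), ∀ x ∈ B,
      (x - c) 0 = ‖x - c‖ * Real.cos (Ψ x) ∧ (x - c) 1 = ‖x - c‖ * Real.sin (Ψ x) ∧
      φ ≤ Ψ x ∧ Ψ x ≤ φ + θ := by
  classical
  -- separation
  obtain ⟨f, u', hfc, hfB⟩ := geometric_hahn_banach_point_closed hBconv hBclosed hc
  set n : Pt := (InnerProductSpace.toDual ℝ Pt).symm f with hn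
  have hinner : ∀ z : Pt, (inner ℝ n z : ℝ) = f z := fun z =>
    InnerProductSpace.toDual_symm_apply
  have hpos : ∀ x ∈ B, 0 < n 0 * (x - c) 0 + n 1 * (x - c) 1 := by
    intro x hx
    have h1 : (inner ℝ n (x - c) : ℝ) = f x - f c := by rw [hinner]; simp
    have h2 := inner_coords n (x - c)
    have := hfB x hx
    nlinarith [h1, h2]
  have hnne : n ≠ 0 := by
    obtain ⟨x0, hx0⟩ := hBne
    intro h
    have := hpos x0 hx0
    rw [h] at this
    simp [PiLp.zero_apply] at this
  have hnorm : ‖n‖ ≠ 0 := norm_ne_zero_iff.mpr hnne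
  obtain ⟨ν, hν0, hν1⟩ := exists_angle_of_unit
    (show ‖(‖n‖⁻¹ • n : Pt)‖ = 1 by
      rw [norm_smul, norm_inv, norm_norm, inv_mul_cancel₀ hnorm])
  have hν0' : (‖n‖⁻¹ • n : Pt) 0 = ‖n‖⁻¹ * n 0 := by rw [PiLp.smul_apply, smul_eq_mul]
  have hν1' : (‖n‖⁻¹ • n : Pt) 1 = ‖n‖⁻¹ * n 1 := by rw [PiLp.smul_apply, smul_eq_mul]
  rw [hν0'] at hν0
  rw [hν1'] at hν1
  have hwpos : ∀ x ∈ B, 0 < Real.cos ν * (x - c) 0 + Real.sin ν * (x - c) 1 := by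
    intro x hx
    rw [← hν0, ← hν1]
    have h1 := hpos x hx
    have h2 : 0 < ‖n‖⁻¹ := by
      rw [inv_pos, norm_pos_iff]; exact hnne
    nlinarith
  have hr : ∀ x ∈ B, 0 < ‖x - c‖ := by
    intro x hx
    rw [norm_pos_iff, sub_ne_zero]
    rintro rfl; exact hc hx
  obtain ⟨Ψ, hΨ⟩ : ∃ Ψ : Pt → ℝ, ∀ x, Ψ x =
      ν + Real.arcsin ((-Real.sin ν * (x - c) 0 + Real.cos ν * (x - c) 1) / ‖x - c‖) :=
    ⟨_, fun x => rfl⟩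
  have key : ∀ x ∈ B, (x - c) 0 = ‖x - c‖ * Real.cos (Ψ x) ∧
      (x - c) 1 = ‖x - c‖ * Real.sin (Ψ x) := by
    intro x hx
    rw [hΨ]
    exact polar_aux (hr x hx) (by rw [← norm_sq_coords]) (hwpos x hx)
  have hΨmem : ∀ x, Ψ x - ν ∈ Icc (-(π/2)) (π/2) := fun x => by
    rw [hΨ x]; simpa using Real.arcsin_mem_Icc _
  -- angles: |Ψ x - Ψ y| ≤ θ
  have hangle : ∀ x ∈ B, ∀ y ∈ B, |Ψ x - Ψ y| ≤ θ := by
    intro x hx y hy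
    have hxk := key x hx
    have hyk := key y hy
    have hrx := hr x hx
    have hry := hr y hy
    have hinnerxy : (inner ℝ (x - c) (y - c) : ℝ)
        = ‖x - c‖ * ‖y - c‖ * Real.cos (Ψ x - Ψ y) := by
      rw [inner_coords, hxk.1, hxk.2, hyk.1, hyk.2, Real.cos_sub]
      ring
    have hdiff : |Ψ x - Ψ y| ≤ π := by
      have h1 := Set.mem_Icc.mp (hΨmem x)
      have h2 := Set.mem_Icc.mp (hΨmem y)
      rw [abs_le]
      constructor
      · linarith [h1.1, h2.2]
      · linarith [h1.2, h2.1]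
    have h := hang x hx y hy
    rw [InnerProductGeometry.angle, hinnerxy] at h
    rw [show ‖x - c‖ * ‖y - c‖ * Real.cos (Ψ x - Ψ y) / (‖x - c‖ * ‖y - c‖)
        = Real.cos (Ψ x - Ψ y) from by field_simp] at h
    rwa [← Real.cos_abs, Real.arccos_cos (abs_nonneg _) hdiff] at h
  -- infimum
  have hbdd : BddBelow (Ψ '' B) := by
    refine ⟨ν - π/2, ?_⟩
    rintro y ⟨x, hx, rfl⟩
    linarith [(Set.mem_Icc.mp (hΨmem x)).1]
  have hne' : (Ψ '' B).Nonempty := hBne.image Ψ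
  refine ⟨Ψ, sInf (Ψ '' B), fun x hx => ⟨(key x hx).1, (key x hx).2, ?_, ?_⟩⟩
  · exact csInf_le hbdd ⟨x, hx, rfl⟩
  · have : Ψ x - θ ≤ sInf (Ψ '' B) := by
      apply le_csInf hne'
      rintro y ⟨z, hz, rfl⟩
      have := hangle x hx z hz
      rw [abs_le] at this
      linarith [this.1]
    linarith

open Real Pointwise in
lemma exists_mod_pi (y : ℝ) : ∃ (j : ℤ) (β : ℝ), 0 ≤ β ∧ β < π ∧ y = β + j * π := by
  have hπ0 := Real.pi_pos
  refine ⟨⌊y/π⌋, y - ⌊y/π⌋ * π, ?_, ?_, by ring⟩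
  · have h1 := Int.floor_le (y/π)
    have h2 : (⌊y/π⌋ : ℝ) * π ≤ (y/π) * π := mul_le_mul_of_nonneg_right h1 hπ0.le
    rw [div_mul_cancel₀] at h2 <;> [linarith; positivity]
  · have h1 := Int.lt_floor_add_one (y/π)
    have h2 : (y/π) * π < ((⌊y/π⌋ : ℝ) + 1) * π := mul_lt_mul_of_pos_right h1 hπ0
    rw [div_mul_cancel₀] at h2 <;> [linarith; positivity]

open Real Pointwise in
lemma core_bound (B : Set Pt) (hBclosed : IsClosed B) (hBconv : Convex ℝ B)
    (hBne : B.Nonempty) (c : Pt) (hc : c ∉ B) {θ : ℝ} (hθ0 : 0 ≤ θ) (hθπ : θ ≤ π)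
    (hang : ∀ x ∈ B, ∀ y ∈ B, InnerProductGeometry.angle (x - c) (y - c) ≤ θ)
    (v : Pt) :
    ∫⁻ α in {α : ℝ | α ∈ Icc 0 π ∧ ∃ x ∈ B, dot α (x - c) = 0},
        ENNReal.ofReal |dot α v|
      ≤ ENNReal.ofReal (2 * Real.sin (θ/2) * ‖v‖) := by
  have hπ0 := Real.pi_pos
  obtain ⟨Ψ, φ, hΨ⟩ := exists_angle_family B hBclosed hBconv hBne c hc hang
  obtain ⟨j, β, hβ0, hβπ, hβ⟩ := exists_mod_pi (φ + π/2)
  -- covering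
  have hcov : {α : ℝ | α ∈ Icc 0 π ∧ ∃ x ∈ B, dot α (x - c) = 0}
      ⊆ Icc β (min (β+θ) π) ∪ Icc 0 (β+θ-π) ∪ {π} := by
    rintro α ⟨⟨hα0, hαπ⟩, x, hx, hdot⟩
    obtain ⟨h0, h1, hφ1, hφ2⟩ := hΨ x hx
    have hrx : 0 < ‖x - c‖ := by
      rw [norm_pos_iff, sub_ne_zero]
      rintro rfl; exact hc hx
    have hcos : Real.cos (α - Ψ x) = 0 := by
      have heq := dot_polar h0 h1 α
      rw [hdot] at heq
      rcases mul_eq_zero.mp heq.symm with h | h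
      · exact absurd h hrx.ne'
      · exact h
    obtain ⟨k, hk⟩ := Real.cos_eq_zero_iff.mp hcos
    obtain ⟨m, hm⟩ : ∃ m : ℤ, α = β + (Ψ x - φ) + m * π :=
      ⟨k + j, by push_cast; linarith [hk, hβ]⟩
    have hσ1 : 0 ≤ Ψ x - φ := by linarith
    have hσ2 : Ψ x - φ ≤ θ := by linarith
    have hmub : (m : ℝ) * π ≤ π := by linarith
    have hmlb : -2 * π < (m : ℝ) * π := by linarith
    have hm1 : m ≤ 1 := by
      by_contra hcon
      push_neg at hcon
      have h2 : (2:ℝ) ≤ (m:ℝ) := by exact_mod_cast hcon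
      nlinarith
    have hm2 : -1 ≤ m := by
      by_contra hcon
      push_neg at hcon
      have h2' : m ≤ -2 := by omega
      have h2 : (m:ℝ) ≤ -2 := by exact_mod_cast h2'
      nlinarith
    interval_cases m
    · -- m = -1 : α ∈ Icc 0 (β+θ-π)
      left; right
      refine ⟨by linarith, ?_⟩
      push_cast at hm
      linarith
    · -- m = 0 : α ∈ Icc β (β+θ)
      left; left
      push_cast at hm
      exact ⟨by linarith, le_min (by linarith) (by linarith)⟩
    · -- m = 1 : α = π
      right
      push_cast at hm
      simp only [Set.mem_singleton_iff]
      linarith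
  have hsing : ∫⁻ α in ({π} : Set ℝ), ENNReal.ofReal |dot α v| = 0 :=
    setLIntegral_measure_zero _ _ Real.volume_singleton
  calc ∫⁻ α in {α : ℝ | α ∈ Icc 0 π ∧ ∃ x ∈ B, dot α (x - c) = 0}, ENNReal.ofReal |dot α v|
      ≤ ∫⁻ α in (Icc β (min (β+θ) π) ∪ Icc 0 (β+θ-π) ∪ {π}), ENNReal.ofReal |dot α v| :=
        lintegral_mono_set hcov
    _ ≤ (∫⁻ α in (Icc β (min (β+θ) π) ∪ Icc 0 (β+θ-π)), ENNReal.ofReal |dot α v|)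
        + ∫⁻ α in ({π} : Set ℝ), ENNReal.ofReal |dot α v| := lintegral_union_le _ _ _
    _ ≤ (∫⁻ α in Icc β (min (β+θ) π), ENNReal.ofReal |dot α v|)
        + (∫⁻ α in Icc (0:ℝ) (β+θ-π), ENNReal.ofReal |dot α v|) + 0 := by
        rw [hsing]
        exact add_le_add (lintegral_union_le _ _ _) le_rfl
    _ ≤ ENNReal.ofReal (2 * Real.sin (θ/2) * ‖v‖) := by
        rw [add_zero]
        rcases le_or_gt (β+θ) π with hcase | hcase
        · rw [min_eq_left hcase]
          have hnull : volume (Icc (0:ℝ) (β+θ-π)) = 0 := by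
            rw [Real.volume_Icc]
            exact ENNReal.ofReal_eq_zero.mpr (by linarith)
          rw [setLIntegral_measure_zero _ _ hnull, add_zero]
          exact lintegral_dot_window v hθ0 hθπ β
        · rw [min_eq_right hcase.le]
          have hshift := lintegral_dot_shift v (β+θ-π)
          rw [show β+θ-π+π = β+θ by ring] at hshift
          rw [hshift]
          have hIccIco : ∫⁻ α in Icc β π, ENNReal.ofReal |dot α v|
              = ∫⁻ α in Ico β π, ENNReal.ofReal |dot α v| :=
            (setLIntegral_congr Ico_ae_eq_Icc).symm
          rw [hIccIco]
          rw [← lintegral_union measurableSet_Icc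
            (by
              rw [Set.disjoint_left]
              rintro z ⟨-, hz2⟩ ⟨hz3, -⟩
              exact absurd hz3 (not_le.mpr hz2))]
          rw [Set.Ico_union_Icc_eq_Icc (by linarith) hcase.le]
          exact lintegral_dot_window v hθ0 hθπ β

/-- Lemma 8: the measure of all lines meeting both a convex body B and a
segment s disjoint from B is at most 2 sin(θ/2) · |s|, where
θ = max_{c ∈ s} θ(c) is the maximum over apexes c ∈ s of the angle of the minimum
cone with apex c containing B. -/
theorem measure_lines_meeting_body_and_segment
    (B : Set Pt) (hBcomp : IsCompact B) (hBconv : Convex ℝ B)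
    (hBint : (interior B).Nonempty)
    (a b : Pt) (hab : a ≠ b)
    (hdisj : Disjoint (segment ℝ a b) B)
    (θ : ℝ) (hθ : θ = sSup {t : ℝ | ∃ c ∈ segment ℝ a b, t = coneAngle B c}) :
    volume (linesMeetingBoth B (segment ℝ a b))
      ≤ ENNReal.ofReal (2 * Real.sin (θ / 2) * ‖b - a‖) := by
  have hπ0 := Real.pi_pos
  have hBne : B.Nonempty := hBint.mono interior_subset
  -- basic facts about θ
  have hconele : ∀ c, coneAngle B c ≤ Real.pi := fun c =>
    Real.sSup_le (by rintro t ⟨x, hx, y, hy, rfl⟩; exact InnerProductGeometry.angle_le_pi _ _)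
      Real.pi_pos.le
  have hbddcone : ∀ c : Pt, BddAbove {t : ℝ | ∃ x ∈ B, ∃ y ∈ B,
      t = InnerProductGeometry.angle (x - c) (y - c)} := fun c =>
    ⟨Real.pi, by rintro t ⟨x, hx, y, hy, rfl⟩; exact InnerProductGeometry.angle_le_pi _ _⟩
  have hbddθ : BddAbove {t : ℝ | ∃ c ∈ segment ℝ a b, t = coneAngle B c} :=
    ⟨Real.pi, by rintro t ⟨c, hc, rfl⟩; exact hconele c⟩
  have hθπ : θ ≤ Real.pi := by
    rw [hθ]
    exact Real.sSup_le (by rintro t ⟨c, hc, rfl⟩; exact hconele c) Real.pi_pos.le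
  have hang : ∀ c ∈ segment ℝ a b, ∀ x ∈ B, ∀ y ∈ B,
      InnerProductGeometry.angle (x - c) (y - c) ≤ θ := by
    intro c hc x hx y hy
    have h1 : InnerProductGeometry.angle (x - c) (y - c) ≤ coneAngle B c :=
      le_csSup (hbddcone c) ⟨x, hx, y, hy, rfl⟩
    have h2 : coneAngle B c ≤ θ := by
      rw [hθ]; exact le_csSup hbddθ ⟨c, hc, rfl⟩
    linarith
  have hθ0 : 0 ≤ θ := by
    obtain ⟨x0, hx0⟩ := hBne
    have := hang a (left_mem_segment ℝ a b) x0 hx0 x0 hx0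
    linarith [InnerProductGeometry.angle_nonneg (x0 - a) (x0 - a)]
  set v : Pt := b - a with hv
  -- continuity helper
  have hcontdot : ∀ (g : ℝ × ℝ × Pt → Pt), Continuous g →
      Continuous (fun q : ℝ × ℝ × Pt => dot q.1 (g q)) := by
    intro g hg
    have h0 : Continuous fun q : ℝ × ℝ × Pt => (g q) 0 :=
      (continuous_apply (0 : Fin 2)).comp ((PiLp.continuous_ofLp ..).comp hg)
    have h1 : Continuous fun q : ℝ × ℝ × Pt => (g q) 1 :=
      (continuous_apply (1 : Fin 2)).comp ((PiLp.continuous_ofLp ..).comp hg)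
    exact (h0.mul (Real.continuous_cos.comp continuous_fst)).add
      (h1.mul (Real.continuous_sin.comp continuous_fst))
  -- the compact parameter set and projection map
  set K : Set (ℝ × ℝ × Pt) :=
    (Icc 0 Real.pi ×ˢ Icc (0:ℝ) 1 ×ˢ B) ∩
      {q : ℝ × ℝ × Pt | dot q.1 (q.2.2 - (a + q.2.1 • v)) = 0} with hK
  set F : ℝ × ℝ × Pt → ℝ × ℝ := fun q => (q.1, dot q.1 (a + q.2.1 • v)) with hF
  have hgcont : Continuous fun q : ℝ × ℝ × Pt => q.2.2 - (a + q.2.1 • v) :=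
    (continuous_snd.snd).sub (continuous_const.add ((continuous_snd.fst).smul continuous_const))
  have hKcomp : IsCompact K :=
    (isCompact_Icc.prod (isCompact_Icc.prod hBcomp)).inter_right
      (isClosed_singleton.preimage (hcontdot _ hgcont))
  have hFcont : Continuous F :=
    continuous_fst.prodMk (hcontdot _ (continuous_const.add ((continuous_snd.fst).smul continuous_const)))
  -- the projected compact set W
  set W : Set (ℝ × ℝ) := (fun q : ℝ × ℝ × Pt => (q.1, q.2.1)) '' K with hW
  have hWcomp : IsCompact W := hKcomp.image (continuous_fst.prodMk (continuous_snd.fst))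
  have hWmeas : MeasurableSet W := hWcomp.measurableSet
  have hWmem : ∀ α t : ℝ, (α, t) ∈ W ↔
      (α ∈ Icc 0 Real.pi ∧ t ∈ Icc (0:ℝ) 1 ∧ ∃ x ∈ B, dot α (x - (a + t • v)) = 0) := by
    intro α t
    constructor
    · rintro ⟨q, ⟨⟨hq1, hq2, hq3⟩, hq4⟩, hqe⟩
      obtain ⟨rfl, rfl⟩ : q.1 = α ∧ q.2.1 = t := ⟨congrArg Prod.fst hqe, congrArg Prod.snd hqe⟩
      exact ⟨hq1, hq2, q.2.2, hq3, hq4⟩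
    · rintro ⟨h1, h2, x, hx, hdot⟩
      exact ⟨(α, t, x), ⟨⟨h1, h2, hx⟩, hdot⟩, rfl⟩
  -- the inclusion
  have hsub : linesMeetingBoth B (segment ℝ a b) ⊆ F '' K := by
    rintro ⟨α, p⟩ ⟨hα, ⟨x, hxl, hxB⟩, ⟨z, hzl, hzs⟩⟩
    rw [segment_eq_image'] at hzs
    obtain ⟨t, ht, rfl⟩ := hzs
    refine ⟨(α, t, x), ⟨⟨⟨hα.1, hα.2.le⟩, ht, hxB⟩, ?_⟩, ?_⟩
    · show dot α (x - (a + t • v)) = 0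
      rw [dot_sub]
      have hx' : dot α x = p := hxl
      have hz' : dot α (a + t • v) = p := hzl
      rw [hx', hz', sub_self]
    · show (α, dot α (a + t • v)) = (α, p)
      have hz' : dot α (a + t • v) = p := hzl
      rw [hz']
  -- slice computation
  have hsliceimg : ∀ α : ℝ, Prod.mk α ⁻¹' (F '' K)
      = (fun t => dot α a + dot α v * t) '' {t : ℝ | (α, t) ∈ W} := by
    intro α
    ext p
    constructor
    · rintro ⟨q, hqK, hqe⟩
      have hq1 : q.1 = α := congrArg Prod.fst hqe
      have hq2 : dot q.1 (a + q.2.1 • v) = p := congrArg Prod.snd hqe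
      refine ⟨q.2.1, ⟨q, hqK, by show (q.1, q.2.1) = (α, q.2.1); rw [hq1]⟩, ?_⟩
      rw [← hq2, hq1, dot_add, dot_smul, mul_comm]
    · rintro ⟨t, htW, rfl⟩
      rw [Set.mem_setOf_eq, hWmem] at htW
      obtain ⟨h1, h2, x, hx, hdot⟩ := htW
      refine ⟨(α, t, x), ⟨⟨h1, h2, hx⟩, hdot⟩, ?_⟩
      show (α, dot α (a + t • v)) = (α, dot α a + dot α v * t)
      rw [dot_add, dot_smul, mul_comm]
  have hslicevol : ∀ α : ℝ, volume (Prod.mk α ⁻¹' (F '' K))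
      = ENNReal.ofReal |dot α v| * volume {t : ℝ | (α, t) ∈ W} := by
    intro α
    rw [hsliceimg α, volume_affine_image]
  -- put it together with Tonelli
  have hC : (0:ℝ) ≤ 2 * Real.sin (θ/2) * ‖v‖ := by
    have : 0 ≤ Real.sin (θ/2) :=
      Real.sin_nonneg_of_nonneg_of_le_pi (by linarith) (by linarith)
    positivity
  have hsetmeas : ∀ t : ℝ, MeasurableSet {α : ℝ | (α, t) ∈ W} :=
    fun t => hWmeas.preimage (measurable_id.prodMk measurable_const)
  have hmeasfun : Measurable fun p : ℝ × ℝ =>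
      ENNReal.ofReal |dot p.1 v| * W.indicator 1 p := by
    apply Measurable.mul
    · exact ENNReal.measurable_ofReal.comp
        (((dot_continuous v).comp continuous_fst).abs.measurable)
    · exact measurable_one.indicator hWmeas
  calc volume (linesMeetingBoth B (segment ℝ a b))
      ≤ volume (F '' K) := measure_mono hsub
    _ = ∫⁻ α, volume (Prod.mk α ⁻¹' (F '' K)) := by
        rw [MeasureTheory.Measure.volume_eq_prod, Measure.prod_apply
          (hKcomp.image hFcont).measurableSet]
    _ = ∫⁻ α, ENNReal.ofReal |dot α v| * volume {t : ℝ | (α, t) ∈ W} := by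
        exact lintegral_congr fun α => hslicevol α
    _ = ∫⁻ α, ∫⁻ t, ENNReal.ofReal |dot α v| * W.indicator 1 (α, t) := by
        apply lintegral_congr
        intro α
        have hvol : volume {t : ℝ | (α, t) ∈ W}
            = ∫⁻ t, ({t : ℝ | (α, t) ∈ W}).indicator 1 t :=
          (lintegral_indicator_one (hWmeas.preimage measurable_prodMk_left)).symm
        rw [hvol, ← lintegral_const_mul' _ _ ENNReal.ofReal_ne_top]
        apply lintegral_congr
        intro t
        by_cases h : (α, t) ∈ W <;>
          simp [Set.indicator_apply, h]
    _ = ∫⁻ t, ∫⁻ α, ENNReal.ofReal |dot α v| * W.indicator 1 (α, t) := by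
        exact lintegral_lintegral_swap hmeasfun.aemeasurable
    _ ≤ ∫⁻ t, (Icc (0:ℝ) 1).indicator
          (fun _ => ENNReal.ofReal (2 * Real.sin (θ/2) * ‖v‖)) t := by
        apply lintegral_mono
        intro t
        show (∫⁻ α, ENNReal.ofReal |dot α v| * W.indicator 1 (α, t))
          ≤ (Icc (0:ℝ) 1).indicator
            (fun _ => ENNReal.ofReal (2 * Real.sin (θ/2) * ‖v‖)) t
        have hre : ∫⁻ α, ENNReal.ofReal |dot α v| * W.indicator 1 (α, t)
            = ∫⁻ α in {α : ℝ | (α, t) ∈ W}, ENNReal.ofReal |dot α v| := by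
          rw [← lintegral_indicator (hsetmeas t)]
          apply lintegral_congr
          intro α
          by_cases h : (α, t) ∈ W <;>
            simp [Set.indicator_apply, h]
        rw [hre]
        by_cases ht : t ∈ Icc (0:ℝ) 1
        · rw [Set.indicator_of_mem ht]
          have hcseg : a + t • v ∈ segment ℝ a b := by
            rw [segment_eq_image']; exact ⟨t, ht, rfl⟩
          have hcB : a + t • v ∉ B := fun h => Set.disjoint_left.mp hdisj hcseg h
          have hsub2 : {α : ℝ | (α, t) ∈ W}
              ⊆ {α : ℝ | α ∈ Icc 0 Real.pi ∧ ∃ x ∈ B, dot α (x - (a + t • v)) = 0} := by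
            intro α hα
            rw [Set.mem_setOf_eq, hWmem] at hα
            exact ⟨hα.1, hα.2.2⟩
          exact le_trans (lintegral_mono_set hsub2)
            (core_bound B hBcomp.isClosed hBconv hBne (a + t • v) hcB hθ0 hθπ
              (hang _ hcseg) v)
        · rw [Set.indicator_of_notMem ht]
          have hempty : {α : ℝ | (α, t) ∈ W} = ∅ := by
            ext α
            rw [Set.mem_setOf_eq, hWmem]
            simp only [Set.mem_empty_iff_false, iff_false]
            rintro ⟨-, h2, -⟩
            exact ht h2
          rw [hempty]
          simp
    _ = ENNReal.ofReal (2 * Real.sin (θ/2) * ‖v‖) := by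
        rw [lintegral_indicator_const measurableSet_Icc, Real.volume_Icc]
        norm_num
    _ = ENNReal.ofReal (2 * Real.sin (θ / 2) * ‖b - a‖) := rfl
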